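/- Let G be a graph, let P be a set of distinguishable (k+1)-profiles with k = κ(P,G), and let (A₁,A₂), (B₁,B₂) be two separations of order k each of which distinguishes some pair of profiles in P efficiently. Then there are two opposite corner separations of (A₁,A₂) and (B₁,B₂) that have order exactly k and distinguish some pair of profiles in P. -/

import Mathlib

open Set

universe u

variable {V : Type*}

/-- A separation of a graph `G`: a pair of vertex sets covering `V` with no edge
between `A \ B` and `B \ A`. -/
def IsSep (G : SimpleGraph V) (A B : Set V) : Prop :=
  A ∪ B = Set.univ ∧ ∀ a ∈ A \ B, ∀ b ∈ B \ A, ¬ G.Adj a b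

/-- The order on separations: `(A,B) ≤ (C,D)` iff `A ⊆ C` and `D ⊆ B`. -/
def SepLE (A B C D : Set V) : Prop := A ⊆ C ∧ D ⊆ B

/-- Two separations are nested if one is comparable with the other or its reverse. -/
def Nested (A B C D : Set V) : Prop :=
  SepLE A B C D ∨ SepLE C D A B ∨ SepLE A B D C ∨ SepLE D C A B

/-- A set of separations is consistent. -/
def Consistent (P : Set (Set V × Set V)) : Prop :=
  ∀ A B C D : Set V, (A, B) ∈ P → SepLE C D A B → (D, C) ∉ P

/-- The profile axiom (P2). -/
def P2 (P : Set (Set V × Set V)) : Prop :=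
  ∀ p ∈ P, ∀ q ∈ P, (p.2 ∩ q.2, p.1 ∪ q.1) ∉ P

/-- A profile is principal if every subfamily with equal separators has a common
vertex in the intersection of the big sides minus the small sides. -/
def Principal (P : Set (Set V × Set V)) : Prop :=
  ∀ Q ⊆ P, Q.Nonempty → (∀ p ∈ Q, ∀ q ∈ Q, p.1 ∩ p.2 = q.1 ∩ q.2) →
    (⋂ p ∈ Q, (p.2 \ p.1)).Nonempty

/-- Robustness of a set of separations. -/
def Robust (G : SimpleGraph V) (P : Set (Set V × Set V)) : Prop :=
  ∀ A B : Set V, (A, B) ∈ P → (A ∩ B).Finite →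
    ∀ C D : Set V, IsSep G C D → (C ∩ D).Finite →
      ((B ∩ C) ∩ (A ∪ D)).ncard < (A ∩ B).ncard →
      ((B ∩ D) ∩ (A ∪ C)).ncard < (A ∩ B).ncard →
      ((B ∩ C, A ∪ D) ∉ P ∨ (B ∩ D, A ∪ C) ∉ P)

/-- `C` is a (connected) component of `G - X`. -/
def IsComponent (G : SimpleGraph V) (X C : Set V) : Prop :=
  C.Nonempty ∧ C ⊆ Xᶜ ∧ (G.induce C).Connected ∧
    ∀ D : Set V, C ⊆ D → D ⊆ Xᶜ → (G.induce D).Connected → D = C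

/-- The neighbourhood of a vertex set. -/
def setNbhd (G : SimpleGraph V) (C : Set V) : Set V :=
  {v | v ∉ C ∧ ∃ c ∈ C, G.Adj v c}

/-- A separation `(A,B)` distinguishes two profiles. -/
def Distinguishes (A B : Set V) (P P' : Set (Set V × Set V)) : Prop :=
  ((A, B) ∈ P ∧ (B, A) ∈ P') ∨ ((A, B) ∈ P' ∧ (B, A) ∈ P)

/-- A tree-decomposition of `G` modelled on a tree `T`. -/
structure TreeDecomp (G : SimpleGraph V) {τ : Type*} (T : SimpleGraph τ) where
  bag : τ → Set V
  isTree : T.IsTree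
  covers : ∀ v : V, ∃ t, v ∈ bag t
  coversEdges : ∀ u v : V, G.Adj u v → ∃ t, u ∈ bag t ∧ v ∈ bag t
  pathInter : ∀ t₁ t₂ t₃ : τ, ∀ p : T.Walk t₁ t₃, p.IsPath → t₂ ∈ p.support →
    bag t₁ ∩ bag t₃ ⊆ bag t₂

/-- The union of the bags on the side of `s` of the edge `ss'` of the decomposition tree. -/
def sideSet {G : SimpleGraph V} {τ : Type*} {T : SimpleGraph τ} (td : TreeDecomp G T)
    (s s' : τ) : Set V :=
  ⋃ t ∈ {t | (T.deleteEdges {s(s, s')}).Reachable s t}, td.bag t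

/-- The torso of the part `bag t`, as a graph on `V` whose edges live inside `bag t`. -/
def torso (G : SimpleGraph V) {τ : Type*} (T : SimpleGraph τ) (td : TreeDecomp G T)
    (t : τ) : SimpleGraph V where
  Adj x y := x ≠ y ∧ x ∈ td.bag t ∧ y ∈ td.bag t ∧
    (G.Adj x y ∨ ∃ t', T.Adj t t' ∧ x ∈ td.bag t' ∧ y ∈ td.bag t')
  symm := ⟨by
    rintro x y ⟨h1, h2, h3, h4⟩
    refine ⟨h1.symm, h3, h2, ?_⟩
    rcases h4 with h | ⟨t', ht, hx, hy⟩
    · exact Or.inl h.symm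
    · exact Or.inr ⟨t', ht, hy, hx⟩⟩
  loopless := ⟨by rintro x ⟨h1, -⟩; exact h1 rfl⟩

/-- The profile induced by an end of `G`: all separations of finite order such that the
component of the complement of the separator in which the end lives is contained in the
big side. -/
def endProfile (G : SimpleGraph V) (e : ↥G.end) : Set (Set V × Set V) :=
  {p | IsSep G p.1 p.2 ∧ ∃ hf : (p.1 ∩ p.2).Finite,
    ((e.val (Opposite.op hf.toFinset)).supp ⊆ p.2)}


/-- An `l`-profile of `G`: a consistent set of separations of order `< l` satisfying (P2)
and containing an orientation of every separation of order `< l`. -/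
def IsLProfile (G : SimpleGraph V) (P : Set (Set V × Set V)) (l : ℕ) : Prop :=
  Consistent P ∧ P2 P ∧
  (∀ p ∈ P, IsSep G p.1 p.2 ∧ (p.1 ∩ p.2).Finite ∧ (p.1 ∩ p.2).ncard < l) ∧
  (∀ A B : Set V, IsSep G A B → (A ∩ B).Finite → (A ∩ B).ncard < l →
    (A, B) ∈ P ∨ (B, A) ∈ P)

lemma aux_corner_isSep {G : SimpleGraph V} {A₁ A₂ B₁ B₂ : Set V}
    (hA : IsSep G A₁ A₂) (hB : IsSep G B₁ B₂) : IsSep G (A₁ ∩ B₁) (A₂ ∪ B₂) := by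
  constructor
  · ext x
    have h1 : x ∈ A₁ ∪ A₂ := hA.1 ▸ Set.mem_univ x
    have h2 : x ∈ B₁ ∪ B₂ := hB.1 ▸ Set.mem_univ x
    simp only [Set.mem_union] at h1 h2
    simp only [Set.mem_union, Set.mem_inter_iff, Set.mem_univ, iff_true]
    tauto
  · rintro a ⟨⟨ha1, hb1⟩, ha2⟩ b ⟨hb, hbn⟩ hadj
    simp only [Set.mem_union, not_or] at ha2
    simp only [Set.mem_inter_iff, not_and_or] at hbn
    by_cases hbA : b ∈ A₁
    · have hbB1 : b ∉ B₁ := by tauto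
      have hbB2 : b ∈ B₂ := by
        have := hB.1 ▸ Set.mem_univ b
        simp only [Set.mem_union] at this; tauto
      exact hB.2 a ⟨hb1, ha2.2⟩ b ⟨hbB2, hbB1⟩ hadj
    · have hbA2 : b ∈ A₂ := by
        have := hA.1 ▸ Set.mem_univ b
        simp only [Set.mem_union] at this; tauto
      exact hA.2 a ⟨ha1, ha2.1⟩ b ⟨hbA2, hbA⟩ hadj

lemma aux_corner_orders {A₁ A₂ B₁ B₂ : Set V} (hAu : A₁ ∪ A₂ = univ) (hBu : B₁ ∪ B₂ = univ)
    (hAf : (A₁ ∩ A₂).Finite) (hBf : (B₁ ∩ B₂).Finite) :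
    ((A₁ ∩ B₁) ∩ (A₂ ∪ B₂)).ncard + ((A₂ ∩ B₂) ∩ (A₁ ∪ B₁)).ncard
      = (A₁ ∩ A₂).ncard + (B₁ ∩ B₂).ncard := by
  have hAx : ∀ x : V, x ∈ A₁ ∨ x ∈ A₂ := fun x => by
    have := hAu ▸ Set.mem_univ x; simpa [Set.mem_union] using this
  have hBx : ∀ x : V, x ∈ B₁ ∨ x ∈ B₂ := fun x => by
    have := hBu ▸ Set.mem_univ x; simpa [Set.mem_union] using this
  set s₁ := (A₁ ∩ B₁) ∩ (A₂ ∪ B₂) with hs₁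
  set s₂ := (A₂ ∩ B₂) ∩ (A₁ ∪ B₁) with hs₂
  have hu : s₁ ∪ s₂ = (A₁ ∩ A₂) ∪ (B₁ ∩ B₂) := by
    ext x
    have h1 := hAx x; have h2 := hBx x
    simp only [hs₁, hs₂, Set.mem_union, Set.mem_inter_iff]
    tauto
  have hi : s₁ ∩ s₂ = (A₁ ∩ A₂) ∩ (B₁ ∩ B₂) := by
    ext x
    simp only [hs₁, hs₂, Set.mem_union, Set.mem_inter_iff]
    tauto
  have hf : (s₁ ∪ s₂).Finite := by rw [hu]; exact hAf.union hBf
  have hf1 : s₁.Finite := hf.subset Set.subset_union_left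
  have hf2 : s₂.Finite := hf.subset Set.subset_union_right
  have key := Set.ncard_union_add_ncard_inter s₁ s₂ hf1 hf2
  have key2 := Set.ncard_union_add_ncard_inter (A₁ ∩ A₂) (B₁ ∩ B₂) hAf hBf
  rw [hu, hi] at key
  omega

lemma aux_core (G : SimpleGraph V) (Ps : Set (Set (Set V × Set V))) (k : ℕ)
    (hprof : ∀ P ∈ Ps, IsLProfile G P (k + 1))
    (hκ : ∀ A B : Set V, IsSep G A B →
      (∃ P ∈ Ps, ∃ P' ∈ Ps, Distinguishes A B P P') →
      (A ∩ B).Finite ∧ k ≤ (A ∩ B).ncard)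
    (A₁ A₂ B₁ B₂ : Set V) (hA : IsSep G A₁ A₂) (hB : IsSep G B₁ B₂)
    (hAf : (A₁ ∩ A₂).Finite) (hAord : (A₁ ∩ A₂).ncard = k)
    (hBf : (B₁ ∩ B₂).Finite) (hBord : (B₁ ∩ B₂).ncard = k)
    (R R' : Set (Set V × Set V)) (hR : R ∈ Ps) (hR' : R' ∈ Ps)
    (hA1 : (A₁, A₂) ∈ R) (hA2 : (A₂, A₁) ∈ R')
    (hB1 : (B₁, B₂) ∈ R) (hB2 : (B₂, B₁) ∈ R') :
    ((A₁ ∩ B₁) ∩ (A₂ ∪ B₂)).ncard = k ∧ ((A₂ ∩ B₂) ∩ (A₁ ∪ B₁)).ncard = k ∧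
    Distinguishes (A₁ ∩ B₁) (A₂ ∪ B₂) R R' ∧ Distinguishes (A₂ ∩ B₂) (A₁ ∪ B₁) R R' := by
  obtain ⟨hRcons, hRp2, -, hRor⟩ := hprof R hR
  obtain ⟨hR'cons, hR'p2, -, hR'or⟩ := hprof R' hR'
  have hsep1 : IsSep G (A₁ ∩ B₁) (A₂ ∪ B₂) := aux_corner_isSep hA hB
  have hsep2 : IsSep G (A₂ ∩ B₂) (A₁ ∪ B₁) := by
    have hA' : IsSep G A₂ A₁ :=
      ⟨by rw [Set.union_comm]; exact hA.1, fun a ha b hb h => hA.2 b hb a ha h.symm⟩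
    have hB' : IsSep G B₂ B₁ :=
      ⟨by rw [Set.union_comm]; exact hB.1, fun a ha b hb h => hB.2 b hb a ha h.symm⟩
    exact aux_corner_isSep hA' hB'
  have hsum : ((A₁ ∩ B₁) ∩ (A₂ ∪ B₂)).ncard + ((A₂ ∩ B₂) ∩ (A₁ ∪ B₁)).ncard = k + k := by
    rw [aux_corner_orders hA.1 hB.1 hAf hBf, hAord, hBord]
  have hf1 : ((A₁ ∩ B₁) ∩ (A₂ ∪ B₂)).Finite := by
    apply (hAf.union hBf).subset
    rintro x ⟨⟨hx1, hx2⟩, hx3 | hx3⟩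
    · exact Or.inl ⟨hx1, hx3⟩
    · exact Or.inr ⟨hx2, hx3⟩
  have hf2 : ((A₂ ∩ B₂) ∩ (A₁ ∪ B₁)).Finite := by
    apply (hAf.union hBf).subset
    rintro x ⟨⟨hx1, hx2⟩, hx3 | hx3⟩
    · exact Or.inl ⟨hx3, hx1⟩
    · exact Or.inr ⟨hx3, hx2⟩
  -- Claim 1: if corner 1 has order ≤ k, it distinguishes R, R' and has order = k
  have claim1 : ((A₁ ∩ B₁) ∩ (A₂ ∪ B₂)).ncard ≤ k →
      Distinguishes (A₁ ∩ B₁) (A₂ ∪ B₂) R R' ∧ ((A₁ ∩ B₁) ∩ (A₂ ∪ B₂)).ncard = k := by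
    intro hle
    have hlt : ((A₁ ∩ B₁) ∩ (A₂ ∪ B₂)).ncard < k + 1 := by omega
    have hinR : (A₁ ∩ B₁, A₂ ∪ B₂) ∈ R := by
      rcases hRor _ _ hsep1 hf1 hlt with h | h
      · exact h
      · exact absurd h (hRcons A₁ A₂ (A₁ ∩ B₁) (A₂ ∪ B₂) hA1
          ⟨Set.inter_subset_left, Set.subset_union_left⟩)
    have hinR' : (A₂ ∪ B₂, A₁ ∩ B₁) ∈ R' := by
      rcases hR'or _ _ hsep1 hf1 hlt with h | h
      · exact absurd h (hR'p2 (A₂, A₁) hA2 (B₂, B₁) hB2)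
      · exact h
    have hdist : Distinguishes (A₁ ∩ B₁) (A₂ ∪ B₂) R R' := Or.inl ⟨hinR, hinR'⟩
    refine ⟨hdist, le_antisymm hle ?_⟩
    exact (hκ _ _ hsep1 ⟨R, hR, R', hR', hdist⟩).2
  -- Claim 2: if corner 2 has order ≤ k, it distinguishes R, R' and has order = k
  have claim2 : ((A₂ ∩ B₂) ∩ (A₁ ∪ B₁)).ncard ≤ k →
      Distinguishes (A₂ ∩ B₂) (A₁ ∪ B₁) R R' ∧ ((A₂ ∩ B₂) ∩ (A₁ ∪ B₁)).ncard = k := by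
    intro hle
    have hlt : ((A₂ ∩ B₂) ∩ (A₁ ∪ B₁)).ncard < k + 1 := by omega
    have hinR' : (A₂ ∩ B₂, A₁ ∪ B₁) ∈ R' := by
      rcases hR'or _ _ hsep2 hf2 hlt with h | h
      · exact h
      · exact absurd h (hR'cons A₂ A₁ (A₂ ∩ B₂) (A₁ ∪ B₁) hA2
          ⟨Set.inter_subset_left, Set.subset_union_left⟩)
    have hinR : (A₁ ∪ B₁, A₂ ∩ B₂) ∈ R := by
      rcases hRor _ _ hsep2 hf2 hlt with h | h
      · exact absurd h (hRp2 (A₁, A₂) hA1 (B₁, B₂) hB1)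
      · exact h
    have hdist : Distinguishes (A₂ ∩ B₂) (A₁ ∪ B₁) R R' := Or.inr ⟨hinR', hinR⟩
    refine ⟨hdist, le_antisymm hle ?_⟩
    exact (hκ _ _ hsep2 ⟨R, hR, R', hR', hdist⟩).2
  rcases le_or_gt (((A₁ ∩ B₁) ∩ (A₂ ∪ B₂)).ncard) k with h | h
  · obtain ⟨hd1, he1⟩ := claim1 h
    obtain ⟨hd2, he2⟩ := claim2 (by omega)
    exact ⟨he1, he2, hd1, hd2⟩
  · obtain ⟨hd2, he2⟩ := claim2 (by omega)
    obtain ⟨hd1, he1⟩ := claim1 (by omega)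
    exact ⟨he1, he2, hd1, hd2⟩

/-- for two relevant separations of minimal order `k`, two opposite corner
separations have order exactly `k` and distinguish profiles in `Ps`. -/
theorem opposite_corners_relevant (G : SimpleGraph V)
    (Ps : Set (Set (Set V × Set V))) (k : ℕ)
    (hprof : ∀ P ∈ Ps, IsLProfile G P (k + 1))
    (hdist : ∀ P ∈ Ps, ∀ P' ∈ Ps, P ≠ P' →
      ∃ A B : Set V, IsSep G A B ∧ Distinguishes A B P P')
    (hκ : ∀ A B : Set V, IsSep G A B →
      (∃ P ∈ Ps, ∃ P' ∈ Ps, Distinguishes A B P P') →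
      (A ∩ B).Finite ∧ k ≤ (A ∩ B).ncard)
    (A₁ A₂ B₁ B₂ : Set V) (hA : IsSep G A₁ A₂) (hB : IsSep G B₁ B₂)
    (hAf : (A₁ ∩ A₂).Finite) (hAord : (A₁ ∩ A₂).ncard = k)
    (hBf : (B₁ ∩ B₂).Finite) (hBord : (B₁ ∩ B₂).ncard = k)
    (hAdist : ∃ P ∈ Ps, ∃ P' ∈ Ps, Distinguishes A₁ A₂ P P')
    (hBdist : ∃ P ∈ Ps, ∃ P' ∈ Ps, Distinguishes B₁ B₂ P P') :
    ∃ X₁ Y₁ X₂ Y₂ : Set V,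
      (((X₁, Y₁) = (A₁ ∩ B₁, A₂ ∪ B₂) ∧ (X₂, Y₂) = (A₂ ∩ B₂, A₁ ∪ B₁)) ∨
       ((X₁, Y₁) = (A₁ ∩ B₂, A₂ ∪ B₁) ∧ (X₂, Y₂) = (A₂ ∩ B₁, A₁ ∪ B₂))) ∧
      (X₁ ∩ Y₁).ncard = k ∧ (X₂ ∩ Y₂).ncard = k ∧
      (∃ P ∈ Ps, ∃ P' ∈ Ps, Distinguishes X₁ Y₁ P P') ∧
      (∃ P ∈ Ps, ∃ P' ∈ Ps, Distinguishes X₂ Y₂ P P') := by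
  have hB' : IsSep G B₂ B₁ :=
    ⟨by rw [Set.union_comm]; exact hB.1, fun a ha b hb h => hB.2 b hb a ha h.symm⟩
  have hBf' : (B₂ ∩ B₁).Finite := by rwa [Set.inter_comm]
  have hBord' : (B₂ ∩ B₁).ncard = k := by rwa [Set.inter_comm]
  have finish1 : ∀ R ∈ Ps, ∀ R' ∈ Ps, (A₁, A₂) ∈ R → (A₂, A₁) ∈ R' →
      (B₁, B₂) ∈ R → (B₂, B₁) ∈ R' →
      ∃ X₁ Y₁ X₂ Y₂ : Set V,
      (((X₁, Y₁) = (A₁ ∩ B₁, A₂ ∪ B₂) ∧ (X₂, Y₂) = (A₂ ∩ B₂, A₁ ∪ B₁)) ∨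
       ((X₁, Y₁) = (A₁ ∩ B₂, A₂ ∪ B₁) ∧ (X₂, Y₂) = (A₂ ∩ B₁, A₁ ∪ B₂))) ∧
      (X₁ ∩ Y₁).ncard = k ∧ (X₂ ∩ Y₂).ncard = k ∧
      (∃ P ∈ Ps, ∃ P' ∈ Ps, Distinguishes X₁ Y₁ P P') ∧
      (∃ P ∈ Ps, ∃ P' ∈ Ps, Distinguishes X₂ Y₂ P P') := by
    intro R hR R' hR' h1 h2 h3 h4
    obtain ⟨e1, e2, d1, d2⟩ := aux_core G Ps k hprof hκ A₁ A₂ B₁ B₂ hA hB hAf hAord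
      hBf hBord R R' hR hR' h1 h2 h3 h4
    exact ⟨_, _, _, _, Or.inl ⟨rfl, rfl⟩, e1, e2, ⟨R, hR, R', hR', d1⟩, ⟨R, hR, R', hR', d2⟩⟩
  have finish2 : ∀ R ∈ Ps, ∀ R' ∈ Ps, (A₁, A₂) ∈ R → (A₂, A₁) ∈ R' →
      (B₂, B₁) ∈ R → (B₁, B₂) ∈ R' →
      ∃ X₁ Y₁ X₂ Y₂ : Set V,
      (((X₁, Y₁) = (A₁ ∩ B₁, A₂ ∪ B₂) ∧ (X₂, Y₂) = (A₂ ∩ B₂, A₁ ∪ B₁)) ∨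
       ((X₁, Y₁) = (A₁ ∩ B₂, A₂ ∪ B₁) ∧ (X₂, Y₂) = (A₂ ∩ B₁, A₁ ∪ B₂))) ∧
      (X₁ ∩ Y₁).ncard = k ∧ (X₂ ∩ Y₂).ncard = k ∧
      (∃ P ∈ Ps, ∃ P' ∈ Ps, Distinguishes X₁ Y₁ P P') ∧
      (∃ P ∈ Ps, ∃ P' ∈ Ps, Distinguishes X₂ Y₂ P P') := by
    intro R hR R' hR' h1 h2 h3 h4
    obtain ⟨e1, e2, d1, d2⟩ := aux_core G Ps k hprof hκ A₁ A₂ B₂ B₁ hA hB' hAf hAord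
      hBf' hBord' R R' hR hR' h1 h2 h3 h4
    exact ⟨_, _, _, _, Or.inr ⟨rfl, rfl⟩, e1, e2, ⟨R, hR, R', hR', d1⟩, ⟨R, hR, R', hR', d2⟩⟩
  -- normalize the distinguishing pairs
  obtain ⟨P, hP, P', hP', hPA, hP'A⟩ :
      ∃ P ∈ Ps, ∃ P' ∈ Ps, (A₁, A₂) ∈ P ∧ (A₂, A₁) ∈ P' := by
    obtain ⟨P, hP, P', hP', h | h⟩ := hAdist
    · exact ⟨P, hP, P', hP', h.1, h.2⟩
    · exact ⟨P', hP', P, hP, h.1, h.2⟩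
  obtain ⟨Q, hQ, Q', hQ', hQB, hQ'B⟩ :
      ∃ Q ∈ Ps, ∃ Q' ∈ Ps, (B₁, B₂) ∈ Q ∧ (B₂, B₁) ∈ Q' := by
    obtain ⟨Q, hQ, Q', hQ', h | h⟩ := hBdist
    · exact ⟨Q, hQ, Q', hQ', h.1, h.2⟩
    · exact ⟨Q', hQ', Q, hQ, h.1, h.2⟩
  have hBlt : (B₁ ∩ B₂).ncard < k + 1 := by omega
  have hAlt : (A₁ ∩ A₂).ncard < k + 1 := by omega
  have hPor := (hprof P hP).2.2.2 B₁ B₂ hB hBf hBlt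
  have hP'or := (hprof P' hP').2.2.2 B₁ B₂ hB hBf hBlt
  have hQor := (hprof Q hQ).2.2.2 A₁ A₂ hA hAf hAlt
  have hQ'or := (hprof Q' hQ').2.2.2 A₁ A₂ hA hAf hAlt
  rcases hPor with hPB | hPB <;> rcases hP'or with hP'B | hP'B
  · -- both P, P' contain (B₁, B₂)
    rcases hQor with hQA | hQA <;> rcases hQ'or with hQ'A | hQ'A
    · -- Q ∋ A₁, Q' ∋ A₁ : pair Q' with P'
      exact finish2 Q' hQ' P' hP' hQ'A hP'A hQ'B hP'B
    · -- Q ∋ A₁, Q' ∋ A₂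
      exact finish1 Q hQ Q' hQ' hQA hQ'A hQB hQ'B
    · -- Q ∋ A₂, Q' ∋ A₁
      exact finish2 Q' hQ' Q hQ hQ'A hQA hQ'B hQB
    · -- Q ∋ A₂, Q' ∋ A₂ : pair P with Q'
      exact finish1 P hP Q' hQ' hPA hQ'A hPB hQ'B
  · -- P ∋ (B₁,B₂), P' ∋ (B₂,B₁)
    exact finish1 P hP P' hP' hPA hP'A hPB hP'B
  · -- P ∋ (B₂,B₁), P' ∋ (B₁,B₂)
    exact finish2 P hP P' hP' hPA hP'A hPB hP'B
  · -- both P, P' contain (B₂, B₁)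
    rcases hQor with hQA | hQA <;> rcases hQ'or with hQ'A | hQ'A
    · -- Q ∋ A₁, Q' ∋ A₁ : pair Q with P'
      exact finish1 Q hQ P' hP' hQA hP'A hQB hP'B
    · -- Q ∋ A₁, Q' ∋ A₂
      exact finish1 Q hQ Q' hQ' hQA hQ'A hQB hQ'B
    · -- Q ∋ A₂, Q' ∋ A₁
      exact finish2 Q' hQ' Q hQ hQ'A hQA hQ'B hQB
    · -- Q ∋ A₂, Q' ∋ A₂ : pair P with Q
      exact finish2 P hP Q hQ hPA hQA hPB hQB
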